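/- Let |ψ₁⟩ = (|0⟩|01⟩ + |1⟩|10⟩)/√2 on systems r, a1, a2, apply F ⊗ F to systems a1, a2 (with Kraus operators O_i ⊗ O_j), and project onto Π = (I - Z_{d1}Z_{d2})/2. Then the probability of the projection succeeding is Tr[Π ψ₂] = 1 - g, where ψ₂ = Σ_{i,j} (I ⊗ O_i ⊗ O_j)|ψ₁⟩⟨ψ₁|(I ⊗ O_i ⊗ O_j)†. -/

import Mathlib

open Matrix Kronecker

/-- The three Kraus operators of the damping-dephasing channel. -/
noncomputable def Ops (p g : ℝ) : Fin 3 → Matrix (Fin 2) (Fin 2) ℂ :=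
  ![!![(Real.sqrt (1 - p) : ℂ), 0;
      0, (Real.sqrt (1 - p) : ℂ) * (Real.sqrt (1 - g) : ℂ)],
    !![0, (Real.sqrt g : ℂ); 0, 0],
    !![(Real.sqrt p : ℂ), 0;
      0, -((Real.sqrt p : ℂ) * (Real.sqrt (1 - g) : ℂ))]]

/-- Pauli `Z` matrix. -/
def PauliZ : Matrix (Fin 2) (Fin 2) ℂ := !![1, 0; 0, -1]

/-- The state vector `|ψ₁⟩ = (|0⟩|01⟩ + |1⟩|10⟩)/√2` on `r ⊗ a1 ⊗ a2`. -/
noncomputable def psi1 : Fin 2 × Fin 2 × Fin 2 → ℂ := fun x =>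
  if x = ((0 : Fin 2), (0 : Fin 2), (1 : Fin 2)) then ((Real.sqrt 2 : ℝ) : ℂ)⁻¹
  else if x = ((1 : Fin 2), (1 : Fin 2), (0 : Fin 2)) then ((Real.sqrt 2 : ℝ) : ℂ)⁻¹
  else 0

/-- The density operator `|ψ₁⟩⟨ψ₁|`. -/
noncomputable def psi1Op : Matrix (Fin 2 × Fin 2 × Fin 2) (Fin 2 × Fin 2 × Fin 2) ℂ :=
  Matrix.of fun a b => psi1 a * (starRingEnd ℂ) (psi1 b)

/-- Kraus operator `I ⊗ O_i ⊗ O_j` of `id ⊗ F ⊗ F`. -/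
noncomputable def Kop (p g : ℝ) (i j : Fin 3) :
    Matrix (Fin 2 × Fin 2 × Fin 2) (Fin 2 × Fin 2 × Fin 2) ℂ :=
  (1 : Matrix (Fin 2) (Fin 2) ℂ) ⊗ₖ (Ops p g i ⊗ₖ Ops p g j)

/-- The state after sending `a1, a2` through `F ⊗ F`. -/
noncomputable def psi2 (p g : ℝ) :
    Matrix (Fin 2 × Fin 2 × Fin 2) (Fin 2 × Fin 2 × Fin 2) ℂ :=
  ∑ i : Fin 3, ∑ j : Fin 3, Kop p g i j * psi1Op * (Kop p g i j)ᴴ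

/-- The parity projector `Π = (I - Z_{d1} Z_{d2})/2` on `d1, d2`. -/
noncomputable def parityProj :
    Matrix (Fin 2 × Fin 2 × Fin 2) (Fin 2 × Fin 2 × Fin 2) ℂ :=
  (2 : ℂ)⁻¹ • ((1 : Matrix (Fin 2 × Fin 2 × Fin 2) (Fin 2 × Fin 2 × Fin 2) ℂ) -
    (1 : Matrix (Fin 2) (Fin 2) ℂ) ⊗ₖ (PauliZ ⊗ₖ PauliZ))


lemma conj_rankOne {n : Type*} [Fintype n] [DecidableEq n] (A : Matrix n n ℂ) (v : n → ℂ) :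
    A * Matrix.of (fun a b => v a * (starRingEnd ℂ) (v b)) * Aᴴ =
    Matrix.of (fun a b => (A.mulVec v) a * (starRingEnd ℂ) ((A.mulVec v) b)) := by
  ext a b
  simp only [Matrix.mul_apply, Matrix.mulVec, dotProduct, Matrix.of_apply,
    Matrix.conjTranspose_apply, map_sum, _root_.map_mul, Finset.sum_mul, Finset.mul_sum]
  apply Finset.sum_congr rfl; intro d _
  apply Finset.sum_congr rfl; intro c _
  rw [show star (A b d) = (starRingEnd ℂ) (A b d) from rfl]; ring

lemma trace_parity (w : Fin 2 × Fin 2 × Fin 2 → ℂ) :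
    (parityProj * Matrix.of (fun a b => w a * (starRingEnd ℂ) (w b))).trace =
      w (0,0,1) * (starRingEnd ℂ) (w (0,0,1)) + w (0,1,0) * (starRingEnd ℂ) (w (0,1,0)) +
      w (1,0,1) * (starRingEnd ℂ) (w (1,0,1)) + w (1,1,0) * (starRingEnd ℂ) (w (1,1,0)) := by
  simp only [parityProj, PauliZ, Matrix.trace, Matrix.diag, Matrix.mul_apply,
    Matrix.smul_apply, Matrix.sub_apply, Matrix.one_apply, Matrix.kroneckerMap_apply,
    Matrix.of_apply, Fintype.sum_prod_type, Fin.sum_univ_succ, Fin.sum_univ_zero,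
    Matrix.cons_val', Matrix.cons_val_zero, Matrix.cons_val_one, Matrix.head_cons,
    Matrix.empty_val', Matrix.cons_val_fin_one, Matrix.head_fin_const]
  norm_num [Prod.ext_iff]
  ring

theorem parity_projection_probability_aux : True := trivial

set_option maxHeartbeats 1600000 in
theorem parity_projection_probability (p g : ℝ)
    (hp : p ∈ Set.Icc (0 : ℝ) (1/2)) (hg : g ∈ Set.Icc (0 : ℝ) 1) :
    (parityProj * psi2 p g).trace = ((1 - g : ℝ) : ℂ) := by
  obtain ⟨hp0, hp1⟩ := hp
  obtain ⟨hg0, hg1⟩ := hg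
  have hpp : (Real.sqrt p : ℂ) * Real.sqrt p = (p : ℂ) := by
    norm_cast; exact Real.mul_self_sqrt hp0
  have hpq : (Real.sqrt (1-p) : ℂ) * Real.sqrt (1-p) = ((1-p : ℝ) : ℂ) := by
    norm_cast; exact Real.mul_self_sqrt (by linarith)
  have hgg : (Real.sqrt g : ℂ) * Real.sqrt g = (g : ℂ) := by
    norm_cast; exact Real.mul_self_sqrt hg0
  have hgq : (Real.sqrt (1-g) : ℂ) * Real.sqrt (1-g) = ((1-g : ℝ) : ℂ) := by
    norm_cast; exact Real.mul_self_sqrt (by linarith)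
  have h2 : ((Real.sqrt 2 : ℝ) : ℂ)⁻¹ * ((Real.sqrt 2 : ℝ) : ℂ)⁻¹ = (2 : ℂ)⁻¹ := by
    rw [← mul_inv]; norm_cast; rw [Real.mul_self_sqrt (by norm_num)]; norm_num
  have hpsi : psi1Op = Matrix.of (fun a b => psi1 a * (starRingEnd ℂ) (psi1 b)) := rfl
  simp only [psi2, hpsi, conj_rankOne, Finset.mul_sum, Matrix.mul_sum, Matrix.trace_sum,
    trace_parity]
  simp only [Kop, Matrix.mulVec, dotProduct, psi1, Fintype.sum_prod_type,
    Fin.sum_univ_succ, Fin.sum_univ_zero, Ops, Matrix.kroneckerMap_apply, Matrix.one_apply,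
    Matrix.cons_val', Matrix.cons_val_zero, Matrix.cons_val_one, Matrix.head_cons,
    Matrix.empty_val', Matrix.cons_val_fin_one, Matrix.head_fin_const,
    Matrix.cons_val_succ,
    _root_.map_mul, map_inv₀, Complex.conj_ofReal, map_zero, map_neg, map_add]
  norm_num [Prod.ext_iff]
  ring_nf
  rw [show ((Real.sqrt 2:ℝ):ℂ)⁻¹ ^ 2 = ((Real.sqrt 2:ℝ):ℂ)⁻¹ * ((Real.sqrt 2:ℝ):ℂ)⁻¹ by ring, h2]
  ring_nf
  have e1 : ((Real.sqrt (1-p):ℝ):ℂ)^2 = ((1-p:ℝ):ℂ) := by rw [sq, hpq]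
  have e2 : ((Real.sqrt (1-g):ℝ):ℂ)^2 = ((1-g:ℝ):ℂ) := by rw [sq, hgq]
  have e3 : ((Real.sqrt p:ℝ):ℂ)^2 = (p:ℂ) := by rw [sq, hpp]
  rw [show ((Real.sqrt (1-p):ℝ):ℂ)^4 = (((Real.sqrt (1-p):ℝ):ℂ)^2)^2 from by ring,
    show ((Real.sqrt p:ℝ):ℂ)^4 = (((Real.sqrt p:ℝ):ℂ)^2)^2 from by ring, e1, e2, e3]
  push_cast
  ring
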